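/- Let m ≥ 1 and p be an integer with gcd(p, 2m) such that p is a unit mod 2m. The map j ↦ cos²(pπ(2j−1)/(2m) + δ) for j = 1,…,m and the map j ↦ cos²(pπ·2j/(2m) + δ) for j = 1,…,m give multisets that coincide when δ = (2n+1)π/(4m) for any integer n; consequently ∏_{j=1}^m [c + λ² cos²(pπ(2j−1)/(2m)+δ)] = ∏_{j=1}^m [c + λ² cos²(pπ·2j/(2m)+δ)] for every real c and λ. -/

import Mathlib

open Real Finset

lemma cos_sq_eq_of_sum_int_pi (x y : ℝ) (k : ℤ) (h : x + y = k * π) :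
    Real.cos x ^ 2 = Real.cos y ^ 2 := by
  have hy : y = k * π - x := by linarith
  subst hy
  rw [Real.cos_sq, Real.cos_sq]
  have h2 : 2 * ((k : ℝ) * π - x) = (k : ℝ) * (2 * π) - 2 * x := by ring
  rw [h2, Real.cos_int_mul_two_pi_sub]

/-- For `δ = (2n+1)π/(4m)` and `p` a unit mod `2m`, the multiset of values
`cos²(pπ(2j−1)/(2m) + δ)`, `j = 1,…,m`, coincides with the multiset of values
`cos²(pπ·2j/(2m) + δ)`, `j = 1,…,m`; consequently
`∏_{j=1}^m [c + λ² cos²(pπ(2j−1)/(2m)+δ)] = ∏_{j=1}^m [c + λ² cos²(pπ·2j/(2m)+δ)]`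
for all real `c`, `λ`. -/
theorem cos_sq_multisets_coincide (m : ℕ) (hm : 1 ≤ m) (p : ℕ) (hp : Nat.Coprime p (2 * m))
    (n : ℤ) (δ : ℝ) (hδ : δ = (2 * (n : ℝ) + 1) * π / (4 * m)) :
    ((Finset.range m).val.map fun j =>
        Real.cos ((p : ℝ) * π * (2 * (j : ℝ) + 1) / (2 * m) + δ) ^ 2) =
      ((Finset.range m).val.map fun j =>
        Real.cos ((p : ℝ) * π * (2 * (j : ℝ) + 2) / (2 * m) + δ) ^ 2) ∧
    ∀ c lam : ℝ,
      ∏ j ∈ Finset.range m,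
          (c + lam ^ 2 * Real.cos ((p : ℝ) * π * (2 * (j : ℝ) + 1) / (2 * m) + δ) ^ 2) =
      ∏ j ∈ Finset.range m,
          (c + lam ^ 2 * Real.cos ((p : ℝ) * π * (2 * (j : ℝ) + 2) / (2 * m) + δ) ^ 2) := by
  have hm0 : (0:ℤ) < (m:ℤ) := by exact_mod_cast hm
  have hmR : (m:ℝ) ≠ 0 := by positivity
  -- Bezout: q with p*q ≡ 1 mod 2m
  have hcop : IsCoprime (p:ℤ) (2*(m:ℤ)) := by
    rw [Int.isCoprime_iff_gcd_eq_one]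
    have : Int.gcd (p:ℤ) ((2*m : ℕ) : ℤ) = Nat.gcd p (2*m) := by
      rw [Int.gcd_natCast_natCast]
    rw [show (2*(m:ℤ)) = ((2*m:ℕ):ℤ) by push_cast; ring, this]
    exact hp
  obtain ⟨q, v, huv⟩ := hcop
  have hpq : (p:ℤ) * q = 1 - 2*(m:ℤ)*v := by linarith
  -- q is odd
  have hodd : Odd ((p:ℤ) * q) := ⟨-(m*v), by rw [hpq]; ring⟩
  have hqodd : Odd q := (Int.odd_mul.mp hodd).2
  obtain ⟨r, hr⟩ := hqodd
  set T : ℤ := -(2*r*n + r + n + 2) with hTdef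
  have hT : 2*T = -q*(2*n+1) - 3 := by rw [hTdef, hr]; ring
  -- the pairing permutation
  set σ : ℕ → ℕ := fun j => ((T - (j:ℤ)) % (m:ℤ)).toNat with hσdef
  have hσcast : ∀ j : ℕ, ((σ j : ℤ)) = (T - (j:ℤ)) % m := by
    intro j
    have h0 : 0 ≤ (T - (j:ℤ)) % m := Int.emod_nonneg _ (by omega)
    simp [hσdef, Int.toNat_of_nonneg h0]
  have hσlt : ∀ j, σ j < m := by
    intro j
    have h1 : (T - (j:ℤ)) % m < m := Int.emod_lt_of_pos _ hm0
    have h2 : ((σ j : ℤ)) < m := by rw [hσcast]; exact h1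
    exact_mod_cast h2
  -- involution on range m
  have hσσ : ∀ j : ℕ, j < m → σ (σ j) = j := by
    intro j hj
    have h1 : ((T - (j:ℤ)) % m) % m = (T - (j:ℤ)) % m := Int.emod_emod_of_dvd _ dvd_rfl
    have h2 : (T - ((T - (j:ℤ)) % m)) % m = (T - (T - (j:ℤ))) % m := by
      have := Int.ModEq.sub (Int.ModEq.refl T) (h1 : ((T - (j:ℤ)) % m) ≡ (T - (j:ℤ)) [ZMOD (m:ℤ)])
      exact this
    have h3 : ((σ (σ j) : ℤ)) = (j:ℤ) := by
      rw [hσcast, hσcast, h2]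
      have : (T - (T - (j:ℤ))) = (j:ℤ) := by ring
      rw [this]
      exact Int.emod_eq_of_lt (by positivity) (by exact_mod_cast hj)
    exact_mod_cast h3
  -- abbreviate the two functions
  set A : ℕ → ℝ := fun j => Real.cos ((p : ℝ) * π * (2 * (j : ℝ) + 1) / (2 * m) + δ) ^ 2 with hA
  set B : ℕ → ℝ := fun j => Real.cos ((p : ℝ) * π * (2 * (j : ℝ) + 2) / (2 * m) + δ) ^ 2 with hB
  -- key pointwise identity
  have key : ∀ j : ℕ, A j = B (σ j) := by
    intro j
    set e : ℤ := (T - (j:ℤ)) / m with he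
    have hσj : (σ j : ℤ) = T - j - m * e := by
      rw [hσcast]
      rw [Int.emod_def]
    -- integer identity
    have hint : (p:ℤ) * (2*(j:ℤ) + 2*(σ j : ℤ) + 3) + (2*n+1)
        = 2*(m:ℤ) * (v*(2*n+1) - (p:ℤ)*e) := by
      rw [hσj]
      linear_combination (p:ℤ) * hT - (2*n+1) * hpq
    set k : ℤ := v*(2*n+1) - (p:ℤ)*e with hk
    have hintR : (p:ℝ) * (2*(j:ℝ) + 2*((σ j : ℕ):ℝ) + 3) + (2*(n:ℝ)+1)
        = 2*(m:ℝ) * (k:ℝ) := by exact_mod_cast hint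
    apply cos_sq_eq_of_sum_int_pi _ _ k
    rw [hδ]
    field_simp
    linear_combination 4 * hintR
  -- multiset equality
  have hinj : Set.InjOn σ ↑(Finset.range m) := by
    intro a ha b hb hab
    simp only [Finset.coe_range, Set.mem_Iio] at ha hb
    have := congrArg σ hab
    rwa [hσσ a ha, hσσ b hb] at this
  have himg : Finset.image σ (Finset.range m) = Finset.range m := by
    apply Finset.eq_of_subset_of_card_le
    · intro x hx
      simp only [Finset.mem_image, Finset.mem_range] at hx ⊢
      obtain ⟨a, _, rfl⟩ := hx
      exact hσlt a
    · rw [Finset.card_image_of_injOn hinj]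
  have hmapval : (Finset.range m).val.map σ = (Finset.range m).val := by
    rw [← Finset.image_val_of_injOn hinj, himg]
  have hms : (Finset.range m).val.map A = (Finset.range m).val.map B := by
    calc (Finset.range m).val.map A
        = (Finset.range m).val.map (B ∘ σ) := by
          apply Multiset.map_congr rfl
          intro x _
          exact key x
      _ = ((Finset.range m).val.map σ).map B := by rw [Multiset.map_map]
      _ = (Finset.range m).val.map B := by rw [hmapval]
  constructor
  · simpa [Multiset.map_map, Function.comp] using hms
  intro c lam
  have := congrArg (fun t : Multiset ℝ => (t.map (fun x => c + lam ^ 2 * x)).prod) hms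
  simpa [Finset.prod, Multiset.map_map, Function.comp] using this
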